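/- Let X be a CAT(0) cube complex with no infinite family of pairwise-crossing hyperplanes. Then every maximal simplex of the simplicial boundary ∂X is visible; in particular, every isolated 0-simplex of ∂X is visible. -/

import Mathlib

/-!
Combinatorial model of a CAT(0) cube complex via Sageev duality.

`V` is the set of 0-cubes, `H` the set of hyperplanes, and `side h x : Bool`
records which halfspace of the hyperplane `h` contains the 0-cube `x`.
The axioms say exactly that `V` is the set of consistent orientations of the
hyperplanes, each differing from a fixed one on finitely many hyperplanes;
this is precisely the combinatorial data of (the 0-skeleton of) a CAT(0) cube
complex, together with its hyperplane structure.
-/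
structure CCC where
  V : Type
  H : Type
  side : H → V → Bool
  nonempty_V : Nonempty V
  vertex_ext : ∀ x y : V, (∀ h, side h x = side h y) → x = y
  sep_finite : ∀ x y : V, {h : H | side h x ≠ side h y}.Finite
  halfspace_nonempty : ∀ h b, ∃ x, side h x = b
  hyp_inj : ∀ h h' : H, (∀ x, side h x = side h' x) → h = h'
  hyp_inj' : ∀ h h' : H, (∀ x, side h x = !(side h' x)) → h = h'
  realize : ∀ (o : H → Bool) (x : V),
    (∀ h h', ∃ y, side h y = o h ∧ side h' y = o h') →
    {h : H | o h ≠ side h x}.Finite →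
    ∃ y, ∀ h, side h y = o h

namespace CCC

variable (X : CCC)

/-- The combinatorial (1-skeleton) distance between 0-cubes: the number of
separating hyperplanes. -/
noncomputable def dist (x y : X.V) : ℕ := (X.sep_finite x y).toFinset.card

/-- Two 0-cubes are adjacent (joined by a 1-cube) iff exactly one hyperplane
separates them. -/
def Adj (x y : X.V) : Prop :=
  ∃ h, X.side h x ≠ X.side h y ∧ ∀ h', X.side h' x ≠ X.side h' y → h' = h

/-- Two hyperplanes cross iff all four quarter-spaces are nonempty. -/
def Crosses (h h' : X.H) : Prop :=
  ∀ b b' : Bool, ∃ x, X.side h x = b ∧ X.side h' x = b'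

/-- The hyperplane `h'` lies in the halfspace `b` of the hyperplane `h`. -/
def InHalf (h' h : X.H) (b : Bool) : Prop :=
  h' ≠ h ∧ ∃ c : Bool, ∀ x, X.side h x = !b → X.side h' x = c

/-- `h` separates the hyperplanes `h₁` and `h₂`. -/
def SepH (h h₁ h₂ : X.H) : Prop :=
  ∃ b : Bool, X.InHalf h₁ h b ∧ X.InHalf h₂ h (!b)

/-- Two distinct hyperplanes contact iff no third hyperplane separates them. -/
def Contact (h h' : X.H) : Prop := h ≠ h' ∧ ¬ ∃ h'', X.SepH h'' h h'

/-- A facing triple: three distinct hyperplanes, each having a halfspace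
containing the other two. -/
def FacingTriple (h₁ h₂ h₃ : X.H) : Prop :=
  h₁ ≠ h₂ ∧ h₁ ≠ h₃ ∧ h₂ ≠ h₃ ∧
  ∃ b₁ b₂ b₃ : Bool,
    X.InHalf h₂ h₁ b₁ ∧ X.InHalf h₃ h₁ b₁ ∧
    X.InHalf h₁ h₂ b₂ ∧ X.InHalf h₃ h₂ b₂ ∧
    X.InHalf h₁ h₃ b₃ ∧ X.InHalf h₂ h₃ b₃

/-- A set of hyperplanes is inseparable if every hyperplane separating two of
its members belongs to it. -/
def Inseparable (U : Set X.H) : Prop :=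
  ∀ u ∈ U, ∀ u' ∈ U, ∀ h, X.SepH h u u' → h ∈ U

/-- A set of hyperplanes is unidirectional if each member has a halfspace
containing only finitely many members. -/
def Unidirectional (U : Set X.H) : Prop :=
  ∀ u ∈ U, ∃ b : Bool, {h | h ∈ U ∧ X.InHalf h u b}.Finite

def NoFacingTriple (U : Set X.H) : Prop :=
  ∀ h₁ ∈ U, ∀ h₂ ∈ U, ∀ h₃ ∈ U, ¬ X.FacingTriple h₁ h₂ h₃

/-- A unidirectional boundary set (UBS). -/
def IsUBS (U : Set X.H) : Prop :=
  U.Infinite ∧ X.Inseparable U ∧ X.Unidirectional U ∧ X.NoFacingTriple U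

/-- Almost-equivalence: finite symmetric difference. -/
def AlmostEq (U U' : Set X.H) : Prop := (symmDiff U U').Finite

/-- A minimal UBS. -/
def MinUBS (U : Set X.H) : Prop :=
  X.IsUBS U ∧ ∀ U' ⊆ U, X.IsUBS U' → X.AlmostEq U U'

/-- The simplex (= almost-equivalence class of UBSs) represented by `U` is a
face of the simplex represented by `V`. -/
def FaceOf (U V : Set X.H) : Prop :=
  ∃ U' V', X.IsUBS U' ∧ X.IsUBS V' ∧ X.AlmostEq U U' ∧ X.AlmostEq V V' ∧ U' ⊆ V'

/-- `U` decomposes, up to almost-equivalence, into `k` pairwise disjoint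
minimal UBSs; i.e. the class of `U` is a `(k-1)`-simplex of `∂X`. -/
def HasDim (U : Set X.H) (k : ℕ) : Prop :=
  ∃ 𝒰 : Fin k → Set X.H, (∀ i, X.MinUBS (𝒰 i)) ∧
    (∀ i j, i ≠ j → Disjoint (𝒰 i) (𝒰 j)) ∧ X.AlmostEq U (⋃ i, 𝒰 i)

/-- No infinite family of pairwise-crossing hyperplanes. -/
def NoInfiniteCrossing : Prop :=
  ∀ S : Set X.H, (∀ h ∈ S, ∀ h' ∈ S, h ≠ h' → X.Crosses h h') → S.Finite

def LocallyFinite : Prop := ∀ x : X.V, {y | X.Adj x y}.Finite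

/-- A combinatorial geodesic ray (parameterized by its vertices). -/
def IsGeodesicRay (γ : ℕ → X.V) : Prop :=
  ∀ m n : ℕ, m ≤ n → X.dist (γ m) (γ n) = n - m

/-- A bi-infinite combinatorial geodesic. -/
def IsGeodesicLine (α : ℤ → X.V) : Prop :=
  ∀ m n : ℤ, m ≤ n → (X.dist (α m) (α n) : ℤ) = n - m

/-- A combinatorial geodesic segment of length `n`. -/
def IsGeodSeg (c : ℕ → X.V) (n : ℕ) : Prop :=
  ∀ i j : ℕ, i ≤ j → j ≤ n → X.dist (c i) (c j) = j - i

/-- The set of hyperplanes crossing (dual to the 1-cubes of) the path `γ`. -/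
def WSet (γ : ℕ → X.V) : Set X.H :=
  {h | ∃ n : ℕ, X.side h (γ n) ≠ X.side h (γ (n+1))}

/-- The 0-cubes of the carrier `N(h)` of the hyperplane `h`. -/
def carrier (h : X.H) : Set X.V :=
  {x | ∃ y, X.Adj x y ∧ X.side h x ≠ X.side h y}

/-- An essential hyperplane: each halfspace contains 0-cubes arbitrarily far
from the carrier. -/
def EssentialHyp (h : X.H) : Prop :=
  ∀ b : Bool, ∀ n : ℕ, ∃ x, X.side h x = b ∧ ∀ y ∈ X.carrier h, n ≤ X.dist x y

/-- Combinatorial convexity of a set of 0-cubes (the 0-skeleton of a convex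
subcomplex). -/
def IsConvexSet (S : Set X.V) : Prop :=
  ∀ x ∈ S, ∀ y ∈ S, ∀ z, X.dist x z + X.dist z y = X.dist x y → z ∈ S

/-- `x` and `y` are joined by a combinatorial path avoiding `S`. -/
def ReachAvoid (S : Set X.V) (x y : X.V) : Prop :=
  ∃ (n : ℕ) (c : ℕ → X.V), c 0 = x ∧ c n = y ∧
    (∀ i < n, X.Adj (c i) (c (i+1))) ∧ ∀ i ≤ n, c i ∉ S

/-- No compact (finite) convex subcomplex disconnects `X`. -/
def CompactlyIndecomposable : Prop :=
  ∀ K : Set X.V, K.Finite → X.IsConvexSet K →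
    ∀ x y : X.V, x ∉ K → y ∉ K → X.ReachAvoid K x y

/-- `γ` bounds an eighth-flat: some eighth-flat (the subcomplex of the standard
tiling of `[0,∞)²` below the graph of an unbounded nondecreasing function)
embeds isometrically and cubically in `X` with image containing `γ`. -/
def BoundsEighthFlat (γ : ℕ → X.V) : Prop :=
  ∃ g : ℕ → ℕ, Monotone g ∧ (∀ N : ℕ, ∃ m, N ≤ g m) ∧
    ∃ e : {p : ℕ × ℕ // p.2 ≤ g p.1} → X.V,
      (∀ p q, X.dist (e p) (e q) = Nat.dist p.1.1 q.1.1 + Nat.dist p.1.2 q.1.2) ∧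
      ∀ n : ℕ, ∃ p, e p = γ n

/-- An edge-chain in the contact graph. -/
def CChain (c : ℕ → X.H) (n : ℕ) : Prop := ∀ i < n, X.Contact (c i) (c (i+1))

/-- Distance in the contact graph `C(X)` (`⊤` if there is no path). -/
noncomputable def cdist (h h' : X.H) : ℕ∞ :=
  sInf {e : ℕ∞ | ∃ (n : ℕ) (c : ℕ → X.H), c 0 = h ∧ c n = h' ∧ X.CChain c n ∧ e = n}

/-- An edge-chain in the crossing graph. -/
def XChain (c : ℕ → X.H) (n : ℕ) : Prop := ∀ i < n, X.Crosses (c i) (c (i+1))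

/-- Distance in the crossing graph `Δ(X)`. -/
noncomputable def xdist (h h' : X.H) : ℕ∞ :=
  sInf {e : ℕ∞ | ∃ (n : ℕ) (c : ℕ → X.H), c 0 = h ∧ c n = h' ∧ X.XChain c n ∧ e = n}

/-- Distance in the full subgraph `Λ(γ)` of the contact graph spanned by the
hyperplanes crossing `γ`. -/
noncomputable def ldist (γ : ℕ → X.V) (h h' : X.H) : ℕ∞ :=
  sInf {e : ℕ∞ | ∃ (n : ℕ) (c : ℕ → X.H), c 0 = h ∧ c n = h' ∧
    (∀ i ≤ n, c i ∈ X.WSet γ) ∧ X.CChain c n ∧ e = n}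

/-- Two 0-simplices of `∂X` (represented by minimal UBSs) are adjacent in the
1-skeleton of `∂X`. -/
def BAdj (U V : Set X.H) : Prop :=
  X.MinUBS U ∧ X.MinUBS V ∧ ¬ X.AlmostEq U V ∧
    ∃ W, X.IsUBS W ∧ X.FaceOf U W ∧ X.FaceOf V W

/-- Distance in the 1-skeleton of the simplicial boundary `∂X`, between the
0-simplices represented by the minimal UBSs `U` and `V`. -/
noncomputable def bdist (U V : Set X.H) : ℕ∞ :=
  sInf {e : ℕ∞ | ∃ (n : ℕ) (c : ℕ → Set X.H),
    X.AlmostEq (c 0) U ∧ X.AlmostEq (c n) V ∧ (∀ i ≤ n, X.MinUBS (c i)) ∧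
    (∀ i < n, X.BAdj (c i) (c (i+1)) ∨ X.AlmostEq (c i) (c (i+1))) ∧ e = n}

/-- Diameter of the contact graph. -/
noncomputable def cdiam : ℕ∞ := ⨆ (h : X.H) (h' : X.H), X.cdist h h'

/-- Diameter of the crossing graph. -/
noncomputable def xdiam : ℕ∞ := ⨆ (h : X.H) (h' : X.H), X.xdist h h'

/-- Diameter of the 1-skeleton of the simplicial boundary. -/
noncomputable def bdiam : ℕ∞ :=
  ⨆ (U : Set X.H) (V : Set X.H) (_ : X.MinUBS U) (_ : X.MinUBS V), X.bdist U V

/-- A consistent orientation of the hyperplanes: any two chosen halfspaces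
intersect. -/
def Consistent (χ : X.H → Bool) : Prop :=
  ∀ h h', ∃ x, X.side h x = χ h ∧ X.side h' x = χ h'

/-- The halfspace `b` of `h`, as a set of 0-cubes. -/
def Hs (h : X.H) (b : Bool) : Set X.V := {x | X.side h x = b}

/-- Every simplex of `∂X` is visible, i.e. represented by the set of
hyperplanes crossing some combinatorial geodesic ray. -/
def FullyVisible : Prop :=
  ∀ V, X.IsUBS V → ∃ γ : ℕ → X.V, X.IsGeodesicRay γ ∧ X.AlmostEq (X.WSet γ) V

/-- The halfspace `b` of `h` is shallow: it lies within uniformly bounded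
distance of the carrier of `h`. -/
def ShallowHalf (h : X.H) (b : Bool) : Prop :=
  ∃ R : ℕ, ∀ x, X.side h x = b → ∃ y ∈ X.carrier h, X.dist x y ≤ R

/-- An `r`-avoiding combinatorial path (with respect to the basepoint `x₀`)
of length `n` from `a` to `b`. -/
def AvoidPathLen (x₀ : X.V) (r : ℕ) (a b : X.V) (n : ℕ) : Prop :=
  ∃ c : ℕ → X.V, c 0 = a ∧ c n = b ∧
    (∀ i < n, X.Adj (c i) (c (i+1))) ∧ ∀ i ≤ n, r ≤ X.dist (c i) x₀

/-- Combinatorial geodesic completeness: for every (finite) maximal family of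
pairwise-crossing hyperplanes and every choice of halfspaces, the intersection
of the chosen halfspaces contains 0-cubes arbitrarily far from the
intersection of the carriers. -/
def CombGeodComplete : Prop :=
  ∀ (n : ℕ) (W : Fin n → X.H), Function.Injective W →
    (∀ i j, i ≠ j → X.Crosses (W i) (W j)) →
    (∀ h, ¬ ∀ i, X.Crosses h (W i)) →
    ∀ χ : Fin n → Bool, ∀ R : ℕ,
      ∃ x, (∀ i, X.side (W i) x = χ i) ∧
        ∀ y, (∀ i, y ∈ X.carrier (W i)) → R ≤ X.dist x y

/-- `X` decomposes as a product of two unbounded convex subcomplexes: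
equivalently, the hyperplanes split into two parts, each member of one part
crossing each member of the other, both factors being unbounded. -/
def ProductDecomp : Prop :=
  ∃ H₁ H₂ : Set X.H, Disjoint H₁ H₂ ∧ H₁ ∪ H₂ = Set.univ ∧
    (∀ h₁ ∈ H₁, ∀ h₂ ∈ H₂, X.Crosses h₁ h₂) ∧
    (∀ n : ℕ, ∃ x y : X.V, n ≤ ({h | X.side h x ≠ X.side h y} ∩ H₁).ncard) ∧
    (∀ n : ℕ, ∃ x y : X.V, n ≤ ({h | X.side h x ≠ X.side h y} ∩ H₂).ncard)

/-- `∂X` decomposes as the simplicial join of two disjoint nonempty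
subcomplexes: the 0-simplices split into two nonempty parts, any 0-simplex of
one part spanning a 1-simplex with any 0-simplex of the other. -/
def JoinDecomp : Prop :=
  ∃ 𝒜₁ 𝒜₂ : Set (Set X.H),
    (∀ U ∈ 𝒜₁, X.MinUBS U) ∧ (∀ U ∈ 𝒜₂, X.MinUBS U) ∧
    𝒜₁.Nonempty ∧ 𝒜₂.Nonempty ∧
    (∀ U U', U ∈ 𝒜₁ → X.MinUBS U' → X.AlmostEq U U' → U' ∈ 𝒜₁) ∧
    (∀ U U', U ∈ 𝒜₂ → X.MinUBS U' → X.AlmostEq U U' → U' ∈ 𝒜₂) ∧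
    (∀ U, X.MinUBS U → U ∈ 𝒜₁ ∨ U ∈ 𝒜₂) ∧
    (∀ U ∈ 𝒜₁, ∀ V ∈ 𝒜₂, ¬ X.AlmostEq U V) ∧
    (∀ U ∈ 𝒜₁, ∀ V ∈ 𝒜₂, ∃ W, X.IsUBS W ∧ X.FaceOf U W ∧ X.FaceOf V W)

/-! Relative versions of the hyperplane notions, for a (convex) subcomplex
with 0-cube set `S`; the hyperplanes of the subcomplex are the hyperplanes of
`X` crossing it. -/

/-- `h` crosses the subcomplex with 0-cubes `S`. -/
def CrossesSet (S : Set X.V) (h : X.H) : Prop :=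
  ∃ x ∈ S, ∃ y ∈ S, X.side h x ≠ X.side h y

def InHalfOn (S : Set X.V) (h' h : X.H) (b : Bool) : Prop :=
  h' ≠ h ∧ ∃ c : Bool, ∀ x ∈ S, X.side h x = !b → X.side h' x = c

def SepHOn (S : Set X.V) (h h₁ h₂ : X.H) : Prop :=
  X.CrossesSet S h ∧ ∃ b : Bool, X.InHalfOn S h₁ h b ∧ X.InHalfOn S h₂ h (!b)

def InseparableOn (S : Set X.V) (U : Set X.H) : Prop :=
  ∀ u ∈ U, ∀ u' ∈ U, ∀ h, X.SepHOn S h u u' → h ∈ U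

def UnidirectionalOn (S : Set X.V) (U : Set X.H) : Prop :=
  ∀ u ∈ U, ∃ b : Bool, {h | h ∈ U ∧ X.InHalfOn S h u b}.Finite

def NoFacingTripleOn (S : Set X.V) (U : Set X.H) : Prop :=
  ∀ h₁ ∈ U, ∀ h₂ ∈ U, ∀ h₃ ∈ U, ¬ (h₁ ≠ h₂ ∧ h₁ ≠ h₃ ∧ h₂ ≠ h₃ ∧
    ∃ b₁ b₂ b₃ : Bool,
      X.InHalfOn S h₂ h₁ b₁ ∧ X.InHalfOn S h₃ h₁ b₁ ∧
      X.InHalfOn S h₁ h₂ b₂ ∧ X.InHalfOn S h₃ h₂ b₂ ∧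
      X.InHalfOn S h₁ h₃ b₃ ∧ X.InHalfOn S h₂ h₃ b₃)

/-- A UBS of the subcomplex with 0-cube set `S`. -/
def IsUBSOn (S : Set X.V) (U : Set X.H) : Prop :=
  (∀ h ∈ U, X.CrossesSet S h) ∧ U.Infinite ∧ X.InseparableOn S U ∧
    X.UnidirectionalOn S U ∧ X.NoFacingTripleOn S U

def MinUBSOn (S : Set X.V) (U : Set X.H) : Prop :=
  X.IsUBSOn S U ∧ ∀ U' ⊆ U, X.IsUBSOn S U' → X.AlmostEq U U'

def FaceOfOn (S : Set X.V) (U V : Set X.H) : Prop :=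
  ∃ U' V', X.IsUBSOn S U' ∧ X.IsUBSOn S V' ∧ X.AlmostEq U U' ∧ X.AlmostEq V V' ∧ U' ⊆ V'

def HasDimOn (S : Set X.V) (U : Set X.H) (k : ℕ) : Prop :=
  ∃ 𝒰 : Fin k → Set X.H, (∀ i, X.MinUBSOn S (𝒰 i)) ∧
    (∀ i j, i ≠ j → Disjoint (𝒰 i) (𝒰 j)) ∧ X.AlmostEq U (⋃ i, 𝒰 i)

end CCC

namespace CCC


section Aux

variable (X : CCC)

/-- Far halfspace of `h` relative to basepoint `x0`. -/
def far (x0 : X.V) (h : X.H) : Set X.V := {z | X.side h z ≠ X.side h x0}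

variable {X}

lemma mem_far {x0 : X.V} {h : X.H} {z : X.V} :
    z ∈ X.far x0 h ↔ X.side h z ≠ X.side h x0 := Iff.rfl

lemma far_nonempty (x0 : X.V) (h : X.H) : (X.far x0 h).Nonempty := by
  obtain ⟨z, hz⟩ := X.halfspace_nonempty h (!(X.side h x0))
  exact ⟨z, by simp [mem_far, hz]⟩

lemma bool_cases (b c : Bool) : b = c ∨ b = !c := by
  cases b <;> cases c <;> simp

lemma ne_bool {b c : Bool} (h : b ≠ c) : b = !c := Bool.eq_not_iff.2 h

/-- Antisymmetry: hyperplanes with the same far halfspace are equal. -/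
lemma eq_of_far_subset {x0 : X.V} {h h' : X.H}
    (h1 : X.far x0 h ⊆ X.far x0 h') (h2 : X.far x0 h' ⊆ X.far x0 h) : h = h' := by
  have hiff : ∀ z, X.side h z ≠ X.side h x0 ↔ X.side h' z ≠ X.side h' x0 := by
    intro z
    constructor
    · intro hz; exact h1 hz
    · intro hz; exact h2 hz
  rcases bool_cases (X.side h x0) (X.side h' x0) with he | he
  · apply X.hyp_inj
    intro z
    rcases bool_cases (X.side h z) (X.side h' z) with hz | hz
    · exact hz
    · exfalso
      rcases bool_cases (X.side h z) (X.side h x0) with hv | hv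
      · have : X.side h' z ≠ X.side h' x0 := by
          rw [← he, ← hv, hz]; cases X.side h z <;> simp
        have := (hiff z).2 this
        exact this hv
      · have hz' : X.side h z ≠ X.side h x0 := by rw [hv]; cases X.side h x0 <;> simp
        have := (hiff z).1 hz'
        rw [hz, he] at hv
        apply this
        rw [ne_bool this] at hz
        cases X.side h' z <;> cases X.side h' x0 <;> simp_all
  · apply X.hyp_inj'
    intro z
    rcases bool_cases (X.side h z) (!(X.side h' z)) with hz | hz
    · exact hz
    · exfalso
      simp only [Bool.not_not] at hz
      rcases bool_cases (X.side h z) (X.side h x0) with hv | hv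
      · have : X.side h' z ≠ X.side h' x0 := by
          rw [← hz, hv, he]; cases X.side h' x0 <;> simp
        have := (hiff z).2 this
        exact this hv
      · have hz' : X.side h z ≠ X.side h x0 := by rw [hv]; cases X.side h x0 <;> simp
        have := (hiff z).1 hz'
        apply this
        rw [hz] at hv
        rw [he] at hv
        cases X.side h' z <;> cases X.side h' x0 <;> simp_all

lemma ne_of_far_disjoint {x0 : X.V} {h h' : X.H}
    (hd : X.far x0 h ∩ X.far x0 h' = ∅) : h ≠ h' := by
  rintro rfl
  obtain ⟨z, hz⟩ := far_nonempty x0 h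
  exact absurd hd (by rw [Set.inter_self]; exact (far_nonempty x0 h).ne_empty)

/-- A hyperplane whose far halfspace is contained in that of `h` lies in the far
halfspace of `h`. -/
lemma inHalf_far {x0 : X.V} {h' h : X.H} (hne : h' ≠ h)
    (hsub : X.far x0 h' ⊆ X.far x0 h) : X.InHalf h' h (!(X.side h x0)) := by
  refine ⟨hne, X.side h' x0, ?_⟩
  intro z hz
  simp only [Bool.not_not] at hz
  by_contra hc
  have : z ∈ X.far x0 h' := hc
  have := hsub this
  rw [mem_far, hz] at this
  exact this rfl

/-- A hyperplane whose far halfspace is disjoint from that of `h` lies in the near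
halfspace of `h`. -/
lemma inHalf_near {x0 : X.V} {h' h : X.H} (hne : h' ≠ h)
    (hd : X.far x0 h' ∩ X.far x0 h = ∅) : X.InHalf h' h (X.side h x0) := by
  refine ⟨hne, X.side h' x0, ?_⟩
  intro z hz
  by_contra hc
  have hz' : z ∈ X.far x0 h' := hc
  have : z ∈ X.far x0 h' ∩ X.far x0 h := ⟨hz', by rw [mem_far, hz]; cases X.side h x0 <;> simp⟩
  rw [hd] at this
  exact this

/-- Three hyperplanes with pairwise disjoint far halfspaces form a facing triple. -/
lemma facingTriple_of_disjoint {x0 : X.V} {h1 h2 h3 : X.H}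
    (d12 : X.far x0 h1 ∩ X.far x0 h2 = ∅)
    (d13 : X.far x0 h1 ∩ X.far x0 h3 = ∅)
    (d23 : X.far x0 h2 ∩ X.far x0 h3 = ∅) : X.FacingTriple h1 h2 h3 := by
  have dsymm : ∀ {a b : X.H}, X.far x0 a ∩ X.far x0 b = ∅ → X.far x0 b ∩ X.far x0 a = ∅ := by
    intro a b hab; rwa [Set.inter_comm]
  refine ⟨ne_of_far_disjoint d12, ne_of_far_disjoint d13, ne_of_far_disjoint d23,
    X.side h1 x0, X.side h2 x0, X.side h3 x0, ?_, ?_, ?_, ?_, ?_, ?_⟩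
  · exact inHalf_near (ne_of_far_disjoint (dsymm d12)) (dsymm d12)
  · exact inHalf_near (ne_of_far_disjoint (dsymm d13)) (dsymm d13)
  · exact inHalf_near (ne_of_far_disjoint d12) d12
  · exact inHalf_near (ne_of_far_disjoint (dsymm d23)) (dsymm d23)
  · exact inHalf_near (ne_of_far_disjoint d13) d13
  · exact inHalf_near (ne_of_far_disjoint d23) d23

/-- Two distinct hyperplanes with all four quarters nonempty cross. -/
lemma crosses_of_quarters {x0 : X.V} {h h' : X.H}
    (hff : (X.far x0 h ∩ X.far x0 h').Nonempty)
    (hnf : ¬ X.far x0 h ⊆ X.far x0 h')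
    (hfn : ¬ X.far x0 h' ⊆ X.far x0 h) : X.Crosses h h' := by
  intro b b'
  obtain ⟨y, hy1, hy2⟩ := hff
  obtain ⟨z, hz1, hz2⟩ : ∃ z, z ∈ X.far x0 h ∧ z ∉ X.far x0 h' := by
    by_contra hc; push_neg at hc; exact hnf hc
  obtain ⟨w, hw1, hw2⟩ : ∃ w, w ∈ X.far x0 h' ∧ w ∉ X.far x0 h := by
    by_contra hc; push_neg at hc; exact hfn hc
  simp only [mem_far, not_not] at hy1 hy2 hz1 hz2 hw1 hw2
  rcases bool_cases b (X.side h x0) with hb | hb <;>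
    rcases bool_cases b' (X.side h' x0) with hb' | hb'
  · exact ⟨x0, by rw [hb], by rw [hb']⟩
  · exact ⟨w, by rw [hb, hw2], by rw [hb', ne_bool hw1]⟩
  · exact ⟨z, by rw [hb, ne_bool hz1], by rw [hb', hz2]⟩
  · exact ⟨y, by rw [hb, ne_bool hy1], by rw [hb', ne_bool hy2]⟩

end Aux

end CCC
namespace CCC

section Ramsey

variable {κ : Type} [Finite κ]

lemma pigeon {S : Set ℕ} (hS : S.Infinite) (f : ℕ → κ) :
    ∃ k, {y | y ∈ S ∧ f y = k}.Infinite := by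
  by_contra hc
  push_neg at hc
  have hsub : S ⊆ ⋃ k, {y | y ∈ S ∧ f y = k} :=
    fun y hy => Set.mem_iUnion.2 ⟨f y, hy, rfl⟩
  exact hS ((Set.finite_iUnion hc).subset hsub)

/-- Infinite Ramsey theorem for pairs, with finitely many colors. -/
lemma ramsey_pairs (C : ℕ → ℕ → κ) :
    ∃ (g : ℕ → ℕ) (c : κ), StrictMono g ∧ ∀ i j, i < j → C (g i) (g j) = c := by
  classical
  -- the states: (current point, infinite set of future candidates, uniform color)
  let Good : ℕ × Set ℕ → Prop := fun p =>
    p.2.Infinite ∧ (∀ y ∈ p.2, p.1 < y) ∧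
      (∀ y ∈ p.2, ∀ z ∈ p.2, C p.1 y = C p.1 z)
  -- a step refining a state
  have step_ex : ∀ p : ℕ × Set ℕ, Good p →
      ∃ q : ℕ × Set ℕ, Good q ∧ q.1 = sInf p.2 ∧ q.2 ⊆ p.2 := by
    rintro ⟨x, S⟩ ⟨hinf, hlt, _⟩
    set x' := sInf S with hx'
    have hS1 : {y | y ∈ S ∧ x' < y}.Infinite := by
      have : S \ Set.Iic x' ⊆ {y | y ∈ S ∧ x' < y} := by
        rintro y ⟨hy1, hy2⟩
        exact ⟨hy1, by simpa using hy2⟩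
      exact (hinf.diff (Set.finite_Iic x')).mono this
    obtain ⟨k, hk⟩ := pigeon hS1 (C x')
    refine ⟨(x', {y | (y ∈ S ∧ x' < y) ∧ C x' y = k}), ⟨hk, ?_, ?_⟩, rfl, ?_⟩
    · rintro y ⟨⟨_, hy⟩, _⟩; exact hy
    · rintro y ⟨_, hy⟩ z ⟨_, hz⟩; rw [hy, hz]
    · rintro y ⟨⟨hy, _⟩, _⟩; exact hy
  -- initial state
  have init_ex : ∃ p : ℕ × Set ℕ, Good p ∧ p.1 = 0 := by
    have h0 : ({y | y ∈ Set.Ioi 0 ∧ True}).Infinite := by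
      simp only [and_true]
      exact Set.Ioi_infinite 0
    obtain ⟨k, hk⟩ := pigeon (S := Set.Ioi 0) (Set.Ioi_infinite 0) (C 0)
    refine ⟨(0, {y | y ∈ Set.Ioi 0 ∧ C 0 y = k}), ⟨hk, ?_, ?_⟩, rfl⟩
    · rintro y ⟨hy, _⟩; exact hy
    · rintro y ⟨_, hy⟩ z ⟨_, hz⟩; rw [hy, hz]
  obtain ⟨p0, hp0, _⟩ := init_ex
  -- iterate
  let F : ℕ → {p : ℕ × Set ℕ // Good p} := fun n =>
    Nat.rec ⟨p0, hp0⟩ (fun _ prev => ⟨Classical.choose (step_ex prev.1 prev.2),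
      (Classical.choose_spec (step_ex prev.1 prev.2)).1⟩) n
  have hstep : ∀ n, (F (n+1)).1.1 = sInf (F n).1.2 ∧ (F (n+1)).1.2 ⊆ (F n).1.2 := by
    intro n
    exact ⟨(Classical.choose_spec (step_ex (F n).1 (F n).2)).2.1,
      (Classical.choose_spec (step_ex (F n).1 (F n).2)).2.2⟩
  set x : ℕ → ℕ := fun n => (F n).1.1 with hx
  have hmemnext : ∀ n, x (n+1) ∈ (F n).1.2 := by
    intro n
    have h2 := Nat.sInf_mem (F n).2.1.nonempty
    rw [← (hstep n).1] at h2
    exact h2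
  have hchain : ∀ n m, n ≤ m → (F m).1.2 ⊆ (F n).1.2 := by
    intro n m hnm
    induction m with
    | zero => cases Nat.le_zero.mp hnm; exact subset_rfl
    | succ m ih =>
      rcases Nat.lt_or_ge n (m+1) with hlt | hge
      · exact ((hstep m).2).trans (ih (Nat.lt_succ_iff.mp hlt))
      · have : n = m + 1 := le_antisymm hnm hge
        subst this; exact subset_rfl
  have hmem : ∀ n m, n < m → x m ∈ (F n).1.2 := by
    intro n m hnm
    rcases Nat.exists_eq_add_of_lt hnm with ⟨k, rfl⟩
    have : x (n + k + 1) ∈ (F (n+k)).1.2 := hmemnext (n+k)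
    exact hchain n (n+k) (Nat.le_add_right n k) this
  have hxmono : StrictMono x := by
    apply strictMono_nat_of_lt_succ
    intro n
    exact (F n).2.2.1 _ (hmemnext n)
  -- uniform colors
  set d : ℕ → κ := fun n => C (x n) (x (n+1)) with hd
  have hcol : ∀ n m, n < m → C (x n) (x m) = d n := by
    intro n m hnm
    exact (F n).2.2.2 _ (hmem n m hnm) _ (hmemnext n)
  obtain ⟨c, hc⟩ := pigeon (S := Set.univ) Set.infinite_univ d
  have hc' : {y | d y = c}.Infinite := by
    have : {y | y ∈ Set.univ ∧ d y = c} = {y | d y = c} := by ext y; simp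
    rwa [this] at hc
  refine ⟨fun i => x (Nat.nth (fun y => d y = c) i), c, ?_, ?_⟩
  · exact hxmono.comp (Nat.nth_strictMono hc')
  · intro i j hij
    have hmem' : d (Nat.nth (fun y => d y = c) i) = c := Nat.nth_mem_of_infinite hc' i
    rw [hcol _ _ ((Nat.nth_strictMono hc') hij)]
    exact hmem'

end Ramsey

end CCC
namespace CCC

section Matching

variable {X : CCC}

lemma crosses_symm {h h' : X.H} (hc : X.Crosses h h') : X.Crosses h' h := by
  intro b b'
  obtain ⟨x, hx1, hx2⟩ := hc b' b
  exact ⟨x, hx2, hx1⟩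

/-- From an injective sequence in a UBS, extract a subsequence whose far
halfspaces are decreasing. -/
lemma extract_chain (hX : X.NoInfiniteCrossing) {V : Set X.H} (hV : X.IsUBS V) (x0 : X.V)
    (c : ℕ → X.H) (hcV : ∀ n, c n ∈ V) (hcinj : Function.Injective c) :
    ∃ g : ℕ → ℕ, StrictMono g ∧
      ∀ i j, i < j → X.far x0 (c (g j)) ⊆ X.far x0 (c (g i)) := by
  classical
  set C : ℕ → ℕ → Fin 4 := fun i j =>
    if X.far x0 (c i) ∩ X.far x0 (c j) = ∅ then 0
    else if X.far x0 (c i) ⊆ X.far x0 (c j) then 1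
    else if X.far x0 (c j) ⊆ X.far x0 (c i) then 2 else 3 with hC
  have hC0 : ∀ i j, C i j = 0 → X.far x0 (c i) ∩ X.far x0 (c j) = ∅ := by
    intro i j h; rw [hC] at h; dsimp only at h; split_ifs at h with h1 h2 h3
    · exact h1
    all_goals exact absurd h (by decide)
  have hC1 : ∀ i j, C i j = 1 → X.far x0 (c i) ⊆ X.far x0 (c j) := by
    intro i j h; rw [hC] at h; dsimp only at h; split_ifs at h with h1 h2 h3
    · exact absurd h (by decide)
    · exact h2
    all_goals exact absurd h (by decide)
  have hC2 : ∀ i j, C i j = 2 → X.far x0 (c j) ⊆ X.far x0 (c i) := by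
    intro i j h; rw [hC] at h; dsimp only at h; split_ifs at h with h1 h2 h3
    · exact absurd h (by decide)
    · exact absurd h (by decide)
    · exact h3
    · exact absurd h (by decide)
  have hC3 : ∀ i j, C i j = 3 →
      (X.far x0 (c i) ∩ X.far x0 (c j)).Nonempty ∧
      ¬ X.far x0 (c i) ⊆ X.far x0 (c j) ∧ ¬ X.far x0 (c j) ⊆ X.far x0 (c i) := by
    intro i j h; rw [hC] at h; dsimp only at h; split_ifs at h with h1 h2 h3
    · exact absurd h (by decide)
    · exact absurd h (by decide)
    · exact absurd h (by decide)
    · exact ⟨Set.nonempty_iff_ne_empty.2 h1, h2, h3⟩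
  obtain ⟨g, col, hg, hcol⟩ := ramsey_pairs C
  have hginj : Function.Injective (fun i => c (g i)) := hcinj.comp hg.injective
  rcases col with ⟨v, hv⟩
  interval_cases v
  · -- facing triple
    exfalso
    have d01 := hC0 _ _ (hcol 0 1 (by norm_num))
    have d02 := hC0 _ _ (hcol 0 2 (by norm_num))
    have d12 := hC0 _ _ (hcol 1 2 (by norm_num))
    exact hV.2.2.2 _ (hcV _) _ (hcV _) _ (hcV _)
      (facingTriple_of_disjoint d01 d02 d12)
  · -- increasing: impossible
    exfalso
    obtain ⟨y, hy⟩ := far_nonempty x0 (c (g 0))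
    have hinf : {h : X.H | X.side h y ≠ X.side h x0}.Infinite := by
      refine Set.infinite_of_injective_forall_mem
        (f := fun j : ℕ => c (g (j+1))) ?_ ?_
      · intro i j hij
        have := hginj hij
        omega
      · intro j
        have hsub := hC1 _ _ (hcol 0 (j+1) (by omega))
        exact hsub hy
    exact hinf (X.sep_finite y x0)
  · -- decreasing: done
    exact ⟨g, hg, fun i j hij => hC2 _ _ (hcol i j hij)⟩
  · -- all crossing: impossible
    exfalso
    have hcr : ∀ i j, i < j → X.Crosses (c (g i)) (c (g j)) := by
      intro i j hij
      obtain ⟨hne, hs1, hs2⟩ := hC3 _ _ (hcol i j hij)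
      exact crosses_of_quarters hne hs1 hs2
    have : (Set.range (fun i => c (g i))).Finite := by
      apply hX
      rintro h ⟨i, rfl⟩ h' ⟨j, rfl⟩ hne
      rcases lt_trichotomy i j with hij | hij | hij
      · exact hcr i j hij
      · exact absurd (congrArg (fun k => c (g k)) hij) hne
      · exact crosses_symm (hcr j i hij)
    exact (Set.infinite_range_of_injective hginj) this

lemma no_matching (hX : X.NoInfiniteCrossing) {V : Set X.H} (hV : X.IsUBS V) (x0 : X.V)
    (a b : ℕ → X.H)
    (haV : ∀ n, a n ∈ V) (hbV : ∀ n, b n ∈ V)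
    (hainj : Function.Injective a) (hbinj : Function.Injective b)
    (hab : ∀ n m, a n ≠ b m)
    (hd : ∀ n, X.far x0 (a n) ∩ X.far x0 (b n) = ∅) : False := by
  obtain ⟨g, hg, hga⟩ := extract_chain hX hV x0 a haV hainj
  obtain ⟨g', hg', hgb⟩ := extract_chain hX hV x0 (fun n => b (g n))
    (fun n => hbV _) (hbinj.comp hg.injective)
  set m : ℕ → ℕ := fun i => g (g' i) with hm
  have hminj : Function.Injective m := hg.injective.comp hg'.injective
  have hA : ∀ i j, i < j → X.far x0 (a (m j)) ⊆ X.far x0 (a (m i)) :=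
    fun i j hij => hga (g' i) (g' j) (hg' hij)
  have hB : ∀ i j, i < j → X.far x0 (b (m j)) ⊆ X.far x0 (b (m i)) :=
    fun i j hij => hgb i j hij
  set u : X.H := a (m 0) with hu
  have hdisj : ∀ j, X.far x0 (b (m j)) ∩ X.far x0 u = ∅ := by
    intro j
    rcases Nat.eq_zero_or_pos j with rfl | hj
    · rw [Set.inter_comm]; exact hd (m 0)
    · apply Set.eq_empty_of_subset_empty
      intro z hz
      have : z ∈ X.far x0 (b (m 0)) ∩ X.far x0 u := ⟨hB 0 j hj hz.1, hz.2⟩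
      rw [Set.inter_comm, hd (m 0)] at this
      exact this
  have hSfar : {h : X.H | h ∈ V ∧ X.InHalf h u (!(X.side u x0))}.Infinite := by
    refine Set.infinite_of_injective_forall_mem (f := fun j : ℕ => a (m (j+1))) ?_ ?_
    · intro i j hij
      have := hminj (hainj hij)
      omega
    · intro j
      refine ⟨haV _, inHalf_far ?_ (hA 0 (j+1) (by omega))⟩
      intro hc
      exact (by omega : (j+1 : ℕ) ≠ 0) (hminj (hainj hc))
  have hSnear : {h : X.H | h ∈ V ∧ X.InHalf h u (X.side u x0)}.Infinite := by
    refine Set.infinite_of_injective_forall_mem (f := fun j : ℕ => b (m j)) ?_ ?_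
    · intro i j hij
      exact hminj (hbinj hij)
    · intro j
      exact ⟨hbV _, inHalf_near (Ne.symm (hab (m 0) (m j))) (hdisj j)⟩
  obtain ⟨bb, hfin⟩ := hV.2.2.1 u (haV _)
  rcases bool_cases bb (X.side u x0) with rfl | rfl
  · exact hSnear hfin
  · exact hSfar hfin

end Matching

end CCC
namespace CCC

section Cover

variable {X : CCC}

lemma cover (hX : X.NoInfiniteCrossing) {V : Set X.H} (hV : X.IsUBS V) (x0 : X.V) :
    ∃ S : Set X.H, S.Finite ∧
      ∀ v ∈ V, v ∉ S → ∀ v' ∈ V, v' ∉ S → (X.far x0 v ∩ X.far x0 v').Nonempty := by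
  classical
  by_contra hc
  push_neg at hc
  have H : ∀ S : Set X.H, S.Finite → ∃ p : X.H × X.H,
      p.1 ∈ V ∧ p.1 ∉ S ∧ p.2 ∈ V ∧ p.2 ∉ S ∧ X.far x0 p.1 ∩ X.far x0 p.2 = ∅ := by
    intro S hS
    obtain ⟨v, hv, hvs, v', hv', hvs', hdd⟩ := hc S hS
    exact ⟨(v, v'), hv, hvs, hv', hvs', hdd⟩
  choose f hf1 hf2 hf3 hf4 hf5 using H
  let G : ℕ → {s : Set X.H // s.Finite} := fun n => Nat.rec ⟨∅, Set.finite_empty⟩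
    (fun _ prev => ⟨prev.1 ∪ {(f prev.1 prev.2).1, (f prev.1 prev.2).2},
      prev.2.union ((Set.finite_singleton _).insert _)⟩) n
  set a : ℕ → X.H := fun n => (f (G n).1 (G n).2).1 with ha
  set b : ℕ → X.H := fun n => (f (G n).1 (G n).2).2 with hb
  have hGsucc : ∀ n, (G (n+1)).1 = (G n).1 ∪ {a n, b n} := fun n => rfl
  have hGmono : ∀ n m, n ≤ m → (G n).1 ⊆ (G m).1 := by
    intro n m hnm
    induction m with
    | zero => cases Nat.le_zero.mp hnm; exact subset_rfl
    | succ m ih =>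
      rcases Nat.lt_or_ge n (m+1) with hlt | hge
      · refine (ih (Nat.lt_succ_iff.mp hlt)).trans ?_
        rw [hGsucc m]; exact Set.subset_union_left
      · have : n = m + 1 := le_antisymm hnm hge
        subst this; exact subset_rfl
  have hmemG : ∀ n, a n ∈ (G (n+1)).1 ∧ b n ∈ (G (n+1)).1 := by
    intro n
    rw [hGsucc n]
    constructor
    · exact Set.mem_union_right _ (by simp)
    · exact Set.mem_union_right _ (by simp)
  have hanotin : ∀ n, a n ∉ (G n).1 := fun n => hf2 (G n).1 (G n).2
  have hbnotin : ∀ n, b n ∉ (G n).1 := fun n => hf4 (G n).1 (G n).2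
  have haV : ∀ n, a n ∈ V := fun n => hf1 (G n).1 (G n).2
  have hbV : ∀ n, b n ∈ V := fun n => hf3 (G n).1 (G n).2
  have hdn : ∀ n, X.far x0 (a n) ∩ X.far x0 (b n) = ∅ := fun n => hf5 (G n).1 (G n).2
  have hainj : Function.Injective a := by
    intro i j hij
    by_contra hne
    rcases lt_trichotomy i j with h | h | h
    · have hmem : a i ∈ (G j).1 := hGmono (i+1) j h ((hmemG i).1)
      rw [hij] at hmem
      exact (hanotin j) hmem
    · exact hne h
    · have hmem : a j ∈ (G i).1 := hGmono (j+1) i h ((hmemG j).1)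
      rw [← hij] at hmem
      exact (hanotin i) hmem
  exact no_matching hX hV x0 a b haV hbV hainj
    (by
      intro i j hij
      by_contra hne
      rcases lt_trichotomy i j with h | h | h
      · have hmem : b i ∈ (G j).1 := hGmono (i+1) j h ((hmemG i).2)
        rw [hij] at hmem
        exact (hbnotin j) hmem
      · exact hne h
      · have hmem : b j ∈ (G i).1 := hGmono (j+1) i h ((hmemG j).2)
        rw [← hij] at hmem
        exact (hbnotin i) hmem)
    (by
      intro n m
      intro heq
      rcases lt_trichotomy n m with h | h | h
      · have hmem : a n ∈ (G m).1 := hGmono (n+1) m h ((hmemG n).1)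
        rw [heq] at hmem
        exact (hbnotin m) hmem
      · subst h; exact ne_of_far_disjoint (hdn n) heq
      · have hmem : b m ∈ (G n).1 := hGmono (m+1) n h ((hmemG m).2)
        rw [← heq] at hmem
        exact (hanotin n) hmem)
    hdn

end Cover

end CCC
namespace CCC

section ClHt

variable {X : CCC}

/-- Hyperplanes separating the basepoint from the far halfspace of `h`
(including `h` itself). -/
def clSet (X : CCC) (x0 : X.V) (h : X.H) : Set X.H := {h' | X.far x0 h ⊆ X.far x0 h'}

lemma mem_clSet_self (X : CCC) (x0 : X.V) (h : X.H) : h ∈ X.clSet x0 h :=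
  Set.mem_setOf_eq ▸ subset_rfl

lemma clSet_finite (X : CCC) (x0 : X.V) (h : X.H) : (X.clSet x0 h).Finite := by
  obtain ⟨y, hy⟩ := far_nonempty x0 h
  apply (X.sep_finite y x0).subset
  intro h' hh'
  exact hh' hy

noncomputable def ht (X : CCC) (x0 : X.V) (h : X.H) : ℕ := (X.clSet x0 h).ncard

lemma ht_lt {x0 : X.V} {h h' : X.H} (hmem : h' ∈ X.clSet x0 h) (hne : h' ≠ h) :
    X.ht x0 h' < X.ht x0 h := by
  apply Set.ncard_lt_ncard _ (X.clSet_finite x0 h)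
  rw [ssubset_iff_subset_ne]
  constructor
  · intro k hk
    exact Set.Subset.trans hmem hk
  · intro heq
    have : h ∈ X.clSet x0 h' := heq ▸ X.mem_clSet_self x0 h
    exact hne (eq_of_far_subset this hmem)

/-- Two hyperplanes with a common halfspace are equal. -/
lemma eq_of_halfspaces_eq {h h' : X.H} {a a' : Bool}
    (H : ∀ z, X.side h z = a ↔ X.side h' z = a') : h = h' := by
  cases a
  · cases a'
    · apply X.hyp_inj
      intro z
      have hz := H z
      cases hs : X.side h z <;> cases hs' : X.side h' z <;> simp_all
    · apply X.hyp_inj'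
      intro z
      have hz := H z
      cases hs : X.side h z <;> cases hs' : X.side h' z <;> simp_all
  · cases a'
    · apply X.hyp_inj'
      intro z
      have hz := H z
      cases hs : X.side h z <;> cases hs' : X.side h' z <;> simp_all
    · apply X.hyp_inj
      intro z
      have hz := H z
      cases hs : X.side h z <;> cases hs' : X.side h' z <;> simp_all

/-- Realization of a finite, downward-closed, pairwise far-intersecting set of
hyperplanes as the separation set of a vertex. -/
lemma realize_good (x0 : X.V) (S : Finset X.H)
    (dc : ∀ h ∈ S, ∀ h', X.far x0 h ⊆ X.far x0 h' → h' ∈ S)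
    (pw : ∀ h ∈ S, ∀ h' ∈ S, (X.far x0 h ∩ X.far x0 h').Nonempty) :
    ∃ z : X.V, ∀ h : X.H, X.side h z ≠ X.side h x0 ↔ h ∈ S := by
  classical
  set o : X.H → Bool := fun h => if h ∈ S then !(X.side h x0) else X.side h x0 with ho
  have hcons : ∀ h h', ∃ y, X.side h y = o h ∧ X.side h' y = o h' := by
    intro h h'
    by_cases hh : h ∈ S <;> by_cases hh' : h' ∈ S
    · obtain ⟨y, hy1, hy2⟩ := pw h hh h' hh'
      exact ⟨y, by simp [ho, hh, ne_bool hy1], by simp [ho, hh', ne_bool hy2]⟩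
    · have hns : ¬ X.far x0 h ⊆ X.far x0 h' := fun hsub => hh' (dc h hh h' hsub)
      obtain ⟨y, hy1, hy2⟩ := Set.not_subset.1 hns
      have hy2' : X.side h' y = X.side h' x0 := by
        by_contra hcc; exact hy2 hcc
      exact ⟨y, by simp [ho, hh, ne_bool hy1], by simp [ho, hh', hy2']⟩
    · have hns : ¬ X.far x0 h' ⊆ X.far x0 h := fun hsub => hh (dc h' hh' h hsub)
      obtain ⟨y, hy1, hy2⟩ := Set.not_subset.1 hns
      have hy2' : X.side h y = X.side h x0 := by
        by_contra hcc; exact hy2 hcc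
      exact ⟨y, by simp [ho, hh, hy2'], by simp [ho, hh', ne_bool hy1]⟩
    · exact ⟨x0, by simp [ho, hh], by simp [ho, hh']⟩
  have hfin : {h : X.H | o h ≠ X.side h x0}.Finite := by
    apply S.finite_toSet.subset
    intro h hh
    simp only [Set.mem_setOf_eq, ho] at hh
    by_cases hhs : h ∈ S
    · exact hhs
    · simp [hhs] at hh
  obtain ⟨z, hz⟩ := X.realize o x0 hcons hfin
  refine ⟨z, fun h => ?_⟩
  by_cases hhs : h ∈ S
  · simp [hz h, ho, hhs, Bool.not_ne_self]
  · simp [hz h, ho, hhs]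

end ClHt

end CCC
namespace CCC

section UBST

variable {X : CCC}

/-- The set of hyperplanes separating the basepoint from some far halfspace of a
pairwise far-intersecting family is a UBS. -/
lemma isUBS_T (x0 : X.V) {V' : Set X.H} (hinf : V'.Infinite)
    (pw : ∀ v ∈ V', ∀ v' ∈ V', (X.far x0 v ∩ X.far x0 v').Nonempty) :
    X.IsUBS {h | ∃ v ∈ V', X.far x0 v ⊆ X.far x0 h} := by
  set T : Set X.H := {h | ∃ v ∈ V', X.far x0 v ⊆ X.far x0 h} with hT
  have Tpw : ∀ u ∈ T, ∀ u' ∈ T, (X.far x0 u ∩ X.far x0 u').Nonempty := by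
    rintro u ⟨v, hv, hfv⟩ u' ⟨v', hv', hfv'⟩
    exact (pw v hv v' hv').mono (Set.inter_subset_inter hfv hfv')
  refine ⟨?_, ?_, ?_, ?_⟩
  · -- infinite
    exact hinf.mono (fun v hv => ⟨v, hv, subset_rfl⟩)
  · -- inseparable
    rintro u hu u' hu' h ⟨bb, ⟨hneu, cu, hcu⟩, ⟨hneu', cu', hcu'⟩⟩
    rcases bool_cases (X.side h x0) bb with hb | hb
    · -- x0 on side bb of h : use u'
      have hcu'' : ∀ z, X.side h z = bb → X.side u' z = cu' := by
        intro z hz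
        exact hcu' z (by rw [Bool.not_not]; exact hz)
      have hc0 : X.side u' x0 = cu' := hcu'' x0 hb
      have hsub : X.far x0 u' ⊆ X.far x0 h := by
        intro z hz
        intro hzz
        rw [hb] at hzz
        exact hz ((hcu'' z hzz).trans hc0.symm)
      obtain ⟨v, hv, hfv⟩ := hu'
      exact ⟨v, hv, hfv.trans hsub⟩
    · -- x0 on side !bb of h : use u
      have hc0 : X.side u x0 = cu := hcu x0 hb
      have hsub : X.far x0 u ⊆ X.far x0 h := by
        intro z hz
        intro hzz
        rw [hb] at hzz
        exact hz ((hcu z hzz).trans hc0.symm)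
      obtain ⟨v, hv, hfv⟩ := hu
      exact ⟨v, hv, hfv.trans hsub⟩
  · -- unidirectional
    intro u hu
    refine ⟨X.side u x0, ?_⟩
    apply (X.clSet_finite x0 u).subset
    rintro h ⟨hhT, hneq, c, hc⟩
    rcases bool_cases c (X.side h x0) with hcc | hcc
    · -- impossible: far u and far h disjoint
      exfalso
      have hdd : X.far x0 u ∩ X.far x0 h = ∅ := by
        apply Set.eq_empty_iff_forall_notMem.2
        rintro z ⟨hz1, hz2⟩
        exact hz2 ((hc z (ne_bool hz1)).trans hcc)
      obtain ⟨y, hy⟩ := Tpw u hu h hhT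
      rw [hdd] at hy
      exact hy
    · -- far u ⊆ far h
      intro z hz
      have hzz := (hc z (ne_bool hz)).trans hcc
      show X.side h z ≠ X.side h x0
      rw [hzz]
      exact Bool.not_ne_self _
  · -- no facing triple
    intro h1 hh1 h2 hh2 h3 hh3 htrip
    obtain ⟨ne12, ne13, ne23, b1, b2, b3, i21, i31, i12, i32, i13, i23⟩ := htrip
    have pdisj : ∀ (p q : X.H) (bp bq : Bool), p ≠ q → X.InHalf q p bp → X.InHalf p q bq →
        {z | X.side p z = !bp} ∩ {z | X.side q z = !bq} = ∅ := by
      rintro p q bp bq hne ⟨_, cq, hcq⟩ ⟨_, cp, hcp⟩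
      by_contra hne'
      obtain ⟨y, hy1, hy2⟩ := Set.nonempty_iff_ne_empty.2 hne'
      have hcqv : cq = !bq := (hcq y hy1).symm.trans hy2
      have hcpv : cp = !bp := (hcp y hy2).symm.trans hy1
      apply hne
      apply eq_of_halfspaces_eq (a := !bp) (a' := !bq)
      intro z
      constructor
      · intro hz
        exact (hcq z hz).trans hcqv
      · intro hz
        exact (hcp z hz).trans hcpv
    have d12 := pdisj h1 h2 b1 b2 ne12 i21 i12
    have d13 := pdisj h1 h3 b1 b3 ne13 i31 i13
    have d23 := pdisj h2 h3 b2 b3 ne23 i32 i23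
    have farP : ∀ (p : X.H) (bp : Bool), x0 ∉ {z | X.side p z = !bp} →
        X.far x0 p = {z | X.side p z = !bp} := by
      intro p bp hp
      have hbp : X.side p x0 = bp := by
        rcases bool_cases (X.side p x0) bp with h | h
        · exact h
        · exact absurd h hp
      ext z
      simp only [far, Set.mem_setOf_eq, hbp]
      constructor
      · intro hz; exact ne_bool hz
      · intro hz; rw [hz]; exact Bool.not_ne_self bp
    have key : ∀ (p q : X.H), p ∈ T → q ∈ T →
        ∀ (bp bq : Bool), x0 ∉ {z | X.side p z = !bp} → x0 ∉ {z | X.side q z = !bq} →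
        {z | X.side p z = !bp} ∩ {z | X.side q z = !bq} = ∅ → False := by
      intro p q hp hq bp bq hxp hxq hdd
      obtain ⟨y, hy⟩ := Tpw p hp q hq
      rw [farP p bp hxp, farP q bq hxq] at hy
      rw [hdd] at hy
      exact hy
    by_cases m1 : x0 ∈ {z | X.side h1 z = !b1}
    · have m2 : x0 ∉ {z | X.side h2 z = !b2} := by
        intro m2
        have : x0 ∈ ({z | X.side h1 z = !b1} ∩ {z | X.side h2 z = !b2}) := ⟨m1, m2⟩
        rw [d12] at this; exact this
      have m3 : x0 ∉ {z | X.side h3 z = !b3} := by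
        intro m3
        have : x0 ∈ ({z | X.side h1 z = !b1} ∩ {z | X.side h3 z = !b3}) := ⟨m1, m3⟩
        rw [d13] at this; exact this
      exact key h2 h3 hh2 hh3 b2 b3 m2 m3 d23
    · by_cases m2 : x0 ∈ {z | X.side h2 z = !b2}
      · have m3 : x0 ∉ {z | X.side h3 z = !b3} := by
          intro m3
          have : x0 ∈ ({z | X.side h2 z = !b2} ∩ {z | X.side h3 z = !b3}) := ⟨m2, m3⟩
          rw [d23] at this; exact this
        exact key h1 h3 hh1 hh3 b1 b3 m1 m3 d13
      · exact key h1 h2 hh1 hh2 b1 b2 m1 m2 d12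

end UBST

end CCC
namespace CCC

section Main

variable {X : CCC}

lemma dist_eq_ncard (X : CCC) (x y : X.V) :
    X.dist x y = ({h : X.H | X.side h x ≠ X.side h y} : Set X.H).ncard :=
  (Set.ncard_eq_toFinset_card _ (X.sep_finite x y)).symm

lemma visible_of_max (hX : X.NoInfiniteCrossing) {V : Set X.H} (hV : X.IsUBS V)
    (hmax : ∀ W, X.IsUBS W → X.FaceOf V W → X.FaceOf W V) :
    ∃ γ : ℕ → X.V, X.IsGeodesicRay γ ∧ X.AlmostEq (X.WSet γ) V := by
  classical
  obtain ⟨x0⟩ := X.nonempty_V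
  obtain ⟨S, hSfin, hpw⟩ := cover hX hV x0
  set V' : Set X.H := V \ S with hV'def
  have hV'inf : V'.Infinite := hV.1.diff hSfin
  have pw : ∀ v ∈ V', ∀ v' ∈ V', (X.far x0 v ∩ X.far x0 v').Nonempty :=
    fun v hv v' hv' => hpw v hv.1 hv.2 v' hv'.1 hv'.2
  set T : Set X.H := {h | ∃ v ∈ V', X.far x0 v ⊆ X.far x0 h} with hTdef
  have hUBST : X.IsUBS T := isUBS_T x0 hV'inf pw
  have hV'T : V' ⊆ T := fun v hv => ⟨v, hv, subset_rfl⟩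
  have hTinf : T.Infinite := hV'inf.mono hV'T
  have Tpw : ∀ u ∈ T, ∀ u' ∈ T, (X.far x0 u ∩ X.far x0 u').Nonempty := by
    rintro u ⟨v, hv, hfv⟩ u' ⟨v', hv', hfv'⟩
    exact (pw v hv v' hv').mono (Set.inter_subset_inter hfv hfv')
  have hTdc : ∀ h ∈ T, ∀ h', X.far x0 h ⊆ X.far x0 h' → h' ∈ T := by
    rintro h ⟨v, hv, hfv⟩ h' hsub
    exact ⟨v, hv, hfv.trans hsub⟩
  -- each level of the height function is finite
  have hlevel : ∀ k, {h | h ∈ T ∧ X.ht x0 h = k}.Finite := by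
    intro k
    apply hX
    rintro h ⟨hhT, hhk⟩ h' ⟨hh'T, hh'k⟩ hne
    have hns1 : ¬ X.far x0 h ⊆ X.far x0 h' := by
      intro hsub
      have hlt := ht_lt (x0 := x0) (hmem := hsub) (hne := fun he => hne he.symm)
      rw [hhk, hh'k] at hlt
      omega
    have hns2 : ¬ X.far x0 h' ⊆ X.far x0 h := by
      intro hsub
      have hlt := ht_lt (x0 := x0) (hmem := hsub) (hne := hne)
      rw [hhk, hh'k] at hlt
      omega
    exact crosses_of_quarters (Tpw h hhT h' hh'T) hns1 hns2
  have hAfin : ∀ k, {h | h ∈ T ∧ X.ht x0 h ≤ k}.Finite := by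
    intro k
    have hsub : {h | h ∈ T ∧ X.ht x0 h ≤ k} ⊆
        ⋃ j ∈ Set.Iic k, {h | h ∈ T ∧ X.ht x0 h = j} := by
      rintro h ⟨hhT, hhk⟩
      exact Set.mem_biUnion (Set.mem_Iic.2 hhk) ⟨hhT, rfl⟩
    exact ((Set.finite_Iic k).biUnion (fun j _ => hlevel j)).subset hsub
  -- the enumeration of T by increasing height
  have pick_ex : ∀ F : Finset X.H, ∃ h, h ∈ T ∧ h ∉ F ∧
      ∀ h', h' ∈ T → h' ∉ F → X.ht x0 h ≤ X.ht x0 h' := by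
    intro F
    have hne : (T \ ↑F).Nonempty := (hTinf.diff F.finite_toSet).nonempty
    have hKne : (X.ht x0 '' (T \ ↑F)).Nonempty := hne.image _
    obtain ⟨h, hh, hhK⟩ := Nat.sInf_mem hKne
    refine ⟨h, hh.1, hh.2, ?_⟩
    intro h' h'T h'F
    rw [hhK]
    exact Nat.sInf_le ⟨h', ⟨h'T, h'F⟩, rfl⟩
  choose pick hpick1 hpick2 hpick3 using pick_ex
  set F : ℕ → Finset X.H := fun n => Nat.rec ∅ (fun _ prev => insert (pick prev) prev) n
    with hFdef
  set e : ℕ → X.H := fun n => pick (F n) with hedef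
  have hFsucc : ∀ n, F (n+1) = insert (e n) (F n) := fun n => rfl
  have heT : ∀ n, e n ∈ T := fun n => hpick1 (F n)
  have heF : ∀ n, e n ∉ F n := fun n => hpick2 (F n)
  have hF0 : F 0 = ∅ := rfl
  have hFT : ∀ n, ∀ h ∈ F n, h ∈ T := by
    intro n
    induction n with
    | zero => intro h hh; rw [hF0] at hh; exact absurd hh (Finset.notMem_empty h)
    | succ n ih =>
      intro h hh
      rw [hFsucc n, Finset.mem_insert] at hh
      rcases hh with rfl | hh
      · exact heT n
      · exact ih h hh
  have hcard : ∀ n, (F n).card = n := by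
    intro n
    induction n with
    | zero => rw [hF0]; rfl
    | succ n ih => rw [hFsucc n, Finset.card_insert_of_notMem (heF n), ih]
  have hmono : ∀ n m, n ≤ m → F n ⊆ F m := by
    intro n m hnm
    induction m with
    | zero => cases Nat.le_zero.mp hnm; exact subset_rfl
    | succ m ih =>
      rcases Nat.lt_or_ge n (m+1) with hlt | hge
      · refine (ih (Nat.lt_succ_iff.mp hlt)).trans ?_
        rw [hFsucc m]
        exact Finset.subset_insert _ _
      · have : n = m+1 := le_antisymm hnm hge
        subst this
        exact subset_rfl
  have hdc : ∀ n, ∀ h ∈ F n, ∀ h', X.far x0 h ⊆ X.far x0 h' → h' ∈ F n := by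
    intro n
    induction n with
    | zero => intro h hh; rw [hF0] at hh; exact absurd hh (Finset.notMem_empty h)
    | succ n ih =>
      intro h hh h' hsub
      rw [hFsucc n, Finset.mem_insert] at hh
      rw [hFsucc n, Finset.mem_insert]
      rcases hh with rfl | hh
      · have h'T : h' ∈ T := hTdc (e n) (heT n) h' hsub
        by_cases hee : h' = e n
        · left; exact hee
        · by_cases hFn : h' ∈ F n
          · right; exact hFn
          · exfalso
            have hlt : X.ht x0 h' < X.ht x0 (e n) := ht_lt hsub hee
            have hge : X.ht x0 (e n) ≤ X.ht x0 h' := hpick3 (F n) h' h'T hFn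
            omega
      · right; exact ih h hh h' hsub
  have hexh : ∀ h ∈ T, ∃ n, h ∈ F n := by
    intro h hh
    set k := X.ht x0 h with hk
    set A : Finset X.H := (hAfin k).toFinset with hA
    have hstepA : ∀ j : ℕ, (∃ n, h ∈ F n) ∨ (∃ n, j ≤ (A ∩ F n).card) := by
      intro j
      induction j with
      | zero => right; exact ⟨0, Nat.zero_le _⟩
      | succ j ih =>
        rcases ih with h1 | ⟨n, hn⟩
        · left; exact h1
        · by_cases hmem : h ∈ F n
          · left; exact ⟨n, hmem⟩
          · right
            refine ⟨n+1, ?_⟩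
            have heA : e n ∈ A := by
              rw [hA, Set.Finite.mem_toFinset]
              exact ⟨heT n, hpick3 (F n) h hh hmem⟩
            have hsubset : insert (e n) (A ∩ F n) ⊆ A ∩ F (n+1) := by
              intro x hx
              rw [Finset.mem_insert] at hx
              rcases hx with rfl | hx
              · refine Finset.mem_inter.2 ⟨heA, ?_⟩
                rw [hFsucc n]
                exact Finset.mem_insert_self _ _
              · rcases Finset.mem_inter.1 hx with ⟨hx1, hx2⟩
                exact Finset.mem_inter.2 ⟨hx1, (hmono n (n+1) (by omega)) hx2⟩
            have hcard2 : (insert (e n) (A ∩ F n)).card = (A ∩ F n).card + 1 := by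
              apply Finset.card_insert_of_notMem
              intro hc
              exact (heF n) (Finset.mem_inter.1 hc).2
            have hle := Finset.card_le_card hsubset
            omega
    rcases hstepA (A.card + 1) with hgood | ⟨n, hn⟩
    · exact hgood
    · exfalso
      have hle := Finset.card_le_card (Finset.inter_subset_left (s₁ := A) (s₂ := F n))
      omega
  -- realize the vertices
  have hz_ex : ∀ n, ∃ z, ∀ h, X.side h z ≠ X.side h x0 ↔ h ∈ F n := by
    intro n
    apply realize_good x0 (F n) (hdc n)
    intro h hh h' hh'
    exact Tpw h (hFT n h hh) h' (hFT n h' hh')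
  choose z hz using hz_ex
  have hsep : ∀ m n, m ≤ n → ∀ h,
      (X.side h (z m) ≠ X.side h (z n) ↔ (h ∈ F n ∧ h ∉ F m)) := by
    intro m n hmn h
    constructor
    · intro hne
      by_cases hm : h ∈ F m
      · exfalso
        have h1 := (hz m h).2 hm
        have h2 := (hz n h).2 (hmono m n hmn hm)
        apply hne
        rw [ne_bool h1, ne_bool h2]
      · have h1 : X.side h (z m) = X.side h x0 := by
          by_contra hc
          exact hm ((hz m h).1 hc)
        refine ⟨?_, hm⟩
        apply (hz n h).1
        intro hc
        exact hne (h1.trans hc.symm)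
    · rintro ⟨hn', hm⟩
      have h1 : X.side h (z m) = X.side h x0 := by
        by_contra hc
        exact hm ((hz m h).1 hc)
      have h2 := (hz n h).2 hn'
      rw [h1]
      exact fun hc => h2 hc.symm
  have hray : X.IsGeodesicRay z := by
    intro m n hmn
    have hset : {h : X.H | X.side h (z m) ≠ X.side h (z n)} = ↑(F n \ F m) := by
      ext h
      rw [Set.mem_setOf_eq, hsep m n hmn h]
      simp [Finset.mem_sdiff]
    rw [dist_eq_ncard, hset, Set.ncard_coe_finset, Finset.card_sdiff_of_subset (hmono m n hmn),
      hcard n, hcard m]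
  have hW : X.WSet z = T := by
    ext h
    constructor
    · rintro ⟨n, hn⟩
      have hmem := (hsep n (n+1) (by omega) h).1 hn
      exact hFT (n+1) h hmem.1
    · intro hh
      have hex : ∃ n, h ∈ F n := hexh h hh
      have hn0 : h ∈ F (Nat.find hex) := Nat.find_spec hex
      have hne0 : Nat.find hex ≠ 0 := by
        intro h0
        rw [h0, hF0] at hn0
        exact absurd hn0 (Finset.notMem_empty h)
      obtain ⟨n1, hn1⟩ : ∃ n1, Nat.find hex = n1 + 1 := ⟨Nat.find hex - 1, by omega⟩
      have hnot : h ∉ F n1 := Nat.find_min hex (by omega)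
      refine ⟨n1, ?_⟩
      exact (hsep n1 (n1+1) (by omega) h).2 ⟨by rw [← hn1]; exact hn0, hnot⟩
  have hVT : V \ T ⊆ S := by
    intro v hv
    by_contra hvs
    exact hv.2 (hV'T ⟨hv.1, hvs⟩)
  have hFace : X.FaceOf V T := by
    refine ⟨V ∩ T, T, ?_, hUBST, ?_, ?_, Set.inter_subset_right⟩
    · refine ⟨?_, ?_, ?_, ?_⟩
      · apply hV'inf.mono
        intro v hv
        exact ⟨hv.1, hV'T hv⟩
      · intro u hu u' hu' h hsep'
        exact ⟨hV.2.1 u hu.1 u' hu'.1 h hsep', hUBST.2.1 u hu.2 u' hu'.2 h hsep'⟩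
      · intro u hu
        obtain ⟨bb, hfin⟩ := hV.2.2.1 u hu.1
        exact ⟨bb, hfin.subset (fun h hh => ⟨hh.1.1, hh.2⟩)⟩
      · intro a ha b hb c hc
        exact hV.2.2.2 a ha.1 b hb.1 c hc.1
    · show (symmDiff V (V ∩ T)).Finite
      apply hSfin.subset
      intro h hh
      rw [Set.mem_symmDiff] at hh
      rcases hh with ⟨hh1, hh2⟩ | ⟨hh1, hh2⟩
      · by_contra hs
        exact hh2 ⟨hh1, hV'T ⟨hh1, hs⟩⟩
      · exact absurd hh1.1 hh2
    · show (symmDiff T T).Finite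
      rw [symmDiff_self]
      exact Set.finite_empty
  obtain ⟨U', V'', hU', hV'', aeTU', aeVV'', hsub⟩ := hmax T hUBST hFace
  have aeTU'' : (symmDiff T U').Finite := aeTU'
  have aeVV''' : (symmDiff V V'').Finite := aeVV''
  refine ⟨z, hray, ?_⟩
  show (symmDiff (X.WSet z) V).Finite
  rw [hW]
  apply Set.Finite.subset ((aeTU''.union aeVV''').union hSfin)
  intro h hh
  rw [Set.mem_symmDiff] at hh
  simp only [Set.mem_union]
  rcases hh with ⟨hh1, hh2⟩ | ⟨hh1, hh2⟩
  · by_cases hU : h ∈ U'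
    · left; right
      rw [Set.mem_symmDiff]
      right
      exact ⟨hsub hU, hh2⟩
    · left; left
      rw [Set.mem_symmDiff]
      left
      exact ⟨hh1, hU⟩
  · right
    exact hVT ⟨hh1, hh2⟩

end Main

end CCC

/-- Theorem 4.13 (visibility of maximal simplices).  In a CAT(0) cube complex
with no infinite family of pairwise-crossing hyperplanes, every maximal
simplex of `∂X` is visible; in particular every isolated 0-simplex is
visible. -/
theorem maximal_simplex_visible (X : CCC) (hX : X.NoInfiniteCrossing) :
    (∀ V : Set X.H, X.IsUBS V →
      (∀ W, X.IsUBS W → X.FaceOf V W → X.FaceOf W V) →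
      ∃ γ : ℕ → X.V, X.IsGeodesicRay γ ∧ X.AlmostEq (X.WSet γ) V) ∧
    (∀ V : Set X.H, X.MinUBS V →
      (∀ W, X.IsUBS W → X.FaceOf V W → X.AlmostEq V W) →
      ∃ γ : ℕ → X.V, X.IsGeodesicRay γ ∧ X.AlmostEq (X.WSet γ) V) := by
  constructor
  · intro V hV hmax
    exact CCC.visible_of_max hX hV hmax
  · intro V hMin hmax2
    apply CCC.visible_of_max hX hMin.1
    intro W hW hFVW
    have hae : X.AlmostEq V W := hmax2 W hW hFVW
    refine ⟨V, V, hMin.1, hMin.1, ?_, ?_, subset_rfl⟩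
    · show (symmDiff W V).Finite
      rw [symmDiff_comm]
      exact hae
    · show (symmDiff V V).Finite
      rw [symmDiff_self]
      exact Set.finite_empty
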